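/- Let F be a field of characteristic p. Suppose that for each p-subgroup P of G we are given a group homomorphism φ_P : N_G(P) → F^× with P ≤ ker(φ_P), such that φ_P(x) = φ_{P⟨x_p⟩}(x) for all p-subgroups P and all x ∈ N_G(P). If φ_{1} is the trivial homomorphism (where 1 denotes the trivial subgroup of G), then P·C_G(P) ≤ ker(φ_P) for every p-subgroup P of G. -/

import Mathlib

/-!  Common definitions: representations of finite groups over a commutative ring,
direct summands, permutation modules, vertices, Brauer-type trivial parts, characters,
p-parts of group elements, coherent tuples.  -/

open scoped TensorProduct

universe u v w

section Defs

variable {k : Type u} [CommSemiring k]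

/-- `ρ` is isomorphic to a direct summand of `σ`, equivariantly. -/
def IsSummand {G : Type*} [Monoid G] {V : Type*} [AddCommMonoid V] [Module k V]
    {W : Type*} [AddCommMonoid W] [Module k W]
    (ρ : Representation k G V) (σ : Representation k G W) : Prop :=
  ∃ (i : V →ₗ[k] W) (π : W →ₗ[k] V),
    (∀ g v, i (ρ g v) = σ g (i v)) ∧ (∀ g w, π (σ g w) = ρ g (π w)) ∧ ∀ v, π (i v) = v

/-- equivariant isomorphism of representations -/
def RepEquiv {G : Type*} [Monoid G] {V : Type*} [AddCommMonoid V] [Module k V]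
    {W : Type*} [AddCommMonoid W] [Module k W]
    (ρ : Representation k G V) (σ : Representation k G W) : Prop :=
  ∃ e : V ≃ₗ[k] W, ∀ g v, e (ρ g v) = σ g (e v)

/-- the direct sum of two representations -/
def prodRep {G : Type*} [Monoid G] {V : Type*} [AddCommMonoid V] [Module k V]
    {W : Type*} [AddCommMonoid W] [Module k W]
    (ρ : Representation k G V) (σ : Representation k G W) :
    Representation k G (V × W) where
  toFun g := (ρ g).prodMap (σ g)
  map_one' := by apply LinearMap.ext; intro v; simp
  map_mul' g h := by apply LinearMap.ext; intro v; simp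

/-- the permutation representation attached to an action of `G` on `X` by permutations -/
def permRep {G : Type*} [Group G] (X : Type*) (a : G →* Equiv.Perm X) :
    Representation k G (X → k) where
  toFun g := LinearMap.funLeft k k (a g⁻¹)
  map_one' := by apply LinearMap.ext; intro f; simp [LinearMap.funLeft]
  map_mul' g h := by
    apply LinearMap.ext; intro f; funext x
    simp [LinearMap.funLeft, mul_inv_rev]

/-- a p-permutation module over `k`: a module isomorphic to a direct summand of a
permutation module `k[X]` for a finite `G`-set `X` -/
def IsPermutationSummand {G : Type*} [Group G] {V : Type*} [AddCommMonoid V] [Module k V]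
    (ρ : Representation k G V) : Prop :=
  ∃ (X : Type u) (a : G →* Equiv.Perm X), Finite X ∧ IsSummand ρ (permRep X a)

/-- an indecomposable representation: nonzero, and every equivariant idempotent
endomorphism is `0` or the identity -/
def IsIndecomposableRep {G : Type*} [Monoid G] {V : Type*} [AddCommMonoid V] [Module k V]
    (ρ : Representation k G V) : Prop :=
  (∃ v : V, v ≠ 0) ∧ ∀ f : V →ₗ[k] V,
    (∀ g v, f (ρ g v) = ρ g (f v)) → (∀ v, f (f v) = f v) →
      (∀ v, f v = 0) ∨ (∀ v, f v = v)

/-- the carrier of the induced module `Ind_H^G (Res_H^G ρ)`: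
functions `f : G → V` with `f (h * g) = ρ h (f g)` for `h ∈ H` -/
def indResCarrier {G : Type*} [Group G] {V : Type*} [AddCommMonoid V] [Module k V]
    (ρ : Representation k G V) (H : Subgroup G) : Submodule k (G → V) where
  carrier := {f | ∀ (h : H) (g : G), f (↑h * g) = ρ ↑h (f g)}
  add_mem' := by
    intro f g hf hg h x
    simp only [Pi.add_apply, hf h x, hg h x, map_add]
  zero_mem' := by intro h x; simp
  smul_mem' := by
    intro c f hf h x
    simp only [Pi.smul_apply, hf h x, map_smul]

/-- the representation `Ind_H^G (Res_H^G ρ)`, with `G` acting by right translation -/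
def indResRep {G : Type*} [Group G] {V : Type*} [AddCommMonoid V] [Module k V]
    (ρ : Representation k G V) (H : Subgroup G) :
    Representation k G (indResCarrier ρ H) where
  toFun g :=
    { toFun := fun f => ⟨fun x => (f : G → V) (x * g), fun h x => by
        simpa [mul_assoc] using f.2 h (x * g)⟩
      map_add' := fun f₁ f₂ => rfl
      map_smul' := fun c f => rfl }
  map_one' := by
    apply LinearMap.ext; intro f; apply Subtype.ext; funext x; simp
  map_mul' g₁ g₂ := by
    apply LinearMap.ext; intro f; apply Subtype.ext; funext x
    show (f : G → V) (x * (g₁ * g₂)) = (f : G → V) (x * g₁ * g₂)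
    rw [mul_assoc]

/-- `ρ` is relatively `H`-projective in the sense that it is a direct summand of
`Ind_H^G (Res_H^G ρ)` -/
def IsRelativelyProjective {G : Type*} [Group G] {V : Type*} [AddCommMonoid V] [Module k V]
    (ρ : Representation k G V) (H : Subgroup G) : Prop :=
  IsSummand ρ (indResRep ρ H)

/-- `Q` is a vertex of `ρ`: minimal among the subgroups `R` with
`ρ` a direct summand of `Ind_R^G (Res_R^G ρ)` -/
def IsVertex {G : Type*} [Group G] {V : Type*} [AddCommMonoid V] [Module k V]
    (ρ : Representation k G V) (Q : Subgroup G) : Prop :=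
  IsRelativelyProjective ρ Q ∧ ∀ R : Subgroup G, R < Q → ¬ IsRelativelyProjective ρ R

end Defs

/-- a bundled representation of `G` over `k` -/
structure RepOn (k : Type u) (G : Type v) [CommSemiring k] [Monoid G] :
    Type (max (u + 1) v) where
  carrier : Type u
  [isAddCommGroup : AddCommGroup carrier]
  [isModule : Module k carrier]
  ρ : Representation k G carrier

attribute [instance] RepOn.isAddCommGroup RepOn.isModule

section Defs2

variable {k : Type u} [CommSemiring k]

/-- the subgroup `P` acts trivially on the representation `σ` -/
def TrivialOn {Γ : Type*} [Group Γ] {V : Type*} [AddCommMonoid V] [Module k V]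
    (σ : Representation k Γ V) (P : Subgroup Γ) : Prop :=
  ∀ x ∈ P, ∀ v : V, σ x v = v

/-- `A` is a `P`-trivial part of `σ`: `σ ≅ A ⊕ B` where `P` acts trivially on `A` and
no nonzero direct summand of `B` has trivial `P`-action -/
def IsTrivialPartFor {Γ : Type v} [Group Γ] {V : Type*} [AddCommMonoid V] [Module k V]
    (σ : Representation k Γ V) (P : Subgroup Γ) (A : RepOn k Γ) : Prop :=
  TrivialOn A.ρ P ∧
  ∃ B : RepOn k Γ, RepEquiv σ (prodRep A.ρ B.ρ) ∧
    ∀ U : RepOn k Γ, IsSummand U.ρ B.ρ → TrivialOn U.ρ P → ∀ u : U.carrier, u = 0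

/-- `A` is a `P`-trivial part `M_P` of `ρ`: a direct summand of
`Res^G_{N_G(P)} ρ` with trivial `P`-action whose complement has no nonzero direct
summand with trivial `P`-action -/
def IsPTrivialPart {G : Type v} [Group G] {V : Type*} [AddCommMonoid V] [Module k V]
    (ρ : Representation k G V) (P : Subgroup G) (A : RepOn k ↥(Subgroup.normalizer (P : Set G))) : Prop :=
  IsTrivialPartFor (ρ.comp (Subgroup.normalizer (P : Set G)).subtype) (P.subgroupOf (Subgroup.normalizer (P : Set G))) A

end Defs2

/-- the character value at `x` of the `K ⊗ₖ -` base change of the representation `σ` -/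
noncomputable def charAt {k : Type u} [CommRing k] (K : Type v) [CommRing K] [Algebra k K]
    {Γ : Type*} [Monoid Γ] {V : Type*} [AddCommGroup V] [Module k V]
    (σ : Representation k Γ V) (x : Γ) : K :=
  LinearMap.trace K (TensorProduct k K V) (LinearMap.baseChange K (σ x))

/-- the `p`-part of a group element (of finite order) -/
noncomputable def pPart (p : ℕ) {G : Type*} [Group G] (x : G) : G :=
  x ^ ((orderOf x / p ^ (orderOf x).factorization p) *
    (((orderOf x / p ^ (orderOf x).factorization p : ℕ) :
        ZMod (p ^ (orderOf x).factorization p))⁻¹).val)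

/-- the `p'`-part of a natural number -/
def pPrimePart (p n : ℕ) : ℕ := n / p ^ n.factorization p

/-- the conjugate subgroup `g P g⁻¹` -/
def conjSubgroup {G : Type*} [Group G] (g : G) (P : Subgroup G) : Subgroup G :=
  Subgroup.map (MulAut.conj g).toMonoidHom P

/-- `(ρM, ρN)` is an orthogonal unit pair:
`(M ⊗ M°) ⊕ (N ⊗ N°) ≅ k ⊕ (M ⊗ N°) ⊕ (N ⊗ M°)` equivariantly, i.e.
`[M] - [N]` is an orthogonal unit of the trivial source ring -/
def IsOrthogonalUnitPair {k : Type u} [CommRing k] {G : Type v} [Group G]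
    {V : Type*} [AddCommGroup V] [Module k V] {W : Type*} [AddCommGroup W] [Module k W]
    (ρM : Representation k G V) (ρN : Representation k G W) : Prop :=
  RepEquiv (prodRep (ρM.tprod ρM.dual) (ρN.tprod ρN.dual))
    (prodRep (Representation.trivial k (G := G) (V := k)) (prodRep (ρM.tprod ρN.dual) (ρN.tprod ρM.dual)))

/-- the type of `p`-subgroups of `G` -/
def pSubgroup (p : ℕ) (G : Type*) [Group G] : Type _ := {P : Subgroup G // IsPGroup p ↥P}

/-- a coherent `G`-stable tuple of linear characters:
`P ≤ ker φ_P`, `G`-stability, and the coherence condition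
`φ_P(x) = φ_{P⟨x_p⟩}(x)` for `x ∈ N_G(P)` -/
def CoherentPred (p : ℕ) {G : Type*} [Group G] {L : Type*} [CommMonoid L]
    (φ : ∀ P : pSubgroup p G, ↥(Subgroup.normalizer (P.1 : Set G)) →* Lˣ) : Prop :=
  (∀ (P : pSubgroup p G) (x : G) (hx : x ∈ P.1),
      φ P ⟨x, Subgroup.le_normalizer hx⟩ = 1) ∧
  (∀ (P Q : pSubgroup p G) (g x : G) (hx : x ∈ Subgroup.normalizer (P.1 : Set G)),
      Q.1 = conjSubgroup g P.1 → ∀ (hx' : g * x * g⁻¹ ∈ Subgroup.normalizer (Q.1 : Set G)),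
      φ Q ⟨g * x * g⁻¹, hx'⟩ = φ P ⟨x, hx⟩) ∧
  (∀ (P Q : pSubgroup p G) (x : G) (hx : x ∈ Subgroup.normalizer (P.1 : Set G)),
      Q.1 = P.1 ⊔ Subgroup.zpowers (pPart p x) → ∀ (hx' : x ∈ Subgroup.normalizer (Q.1 : Set G)),
      φ P ⟨x, hx⟩ = φ Q ⟨x, hx'⟩)

section Statement13Helpers

open Subgroup

lemma phi_congr'' {G : Type*} [Group G] {L : Type*} [Monoid L]
    (φ : ∀ P : Subgroup G, ↥(Subgroup.normalizer (P : Set G)) →* L) {P Q : Subgroup G} (h : P = Q)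
    (x : G) (hx : x ∈ Subgroup.normalizer (P : Set G)) (hx' : x ∈ Subgroup.normalizer (Q : Set G)) :
    φ P ⟨x, hx⟩ = φ Q ⟨x, hx'⟩ := by subst h; rfl

lemma centralizer_le_normalizer'' {G : Type*} [Group G] (P : Subgroup G) :
    Subgroup.centralizer (P : Set G) ≤ Subgroup.normalizer (P : Set G) := by
  intro z hz
  rw [Subgroup.mem_normalizer_iff]
  intro h
  constructor
  · intro hh
    have h1 : h * z = z * h := Subgroup.mem_centralizer_iff.mp hz h hh
    have h2 : z * h * z⁻¹ = h := by rw [← h1, mul_assoc, mul_inv_cancel, mul_one]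
    rwa [h2]
  · intro hh
    have h1 : (z * h * z⁻¹) * z = z * (z * h * z⁻¹) := Subgroup.mem_centralizer_iff.mp hz _ hh
    have h2 : h = z⁻¹ * ((z * h * z⁻¹) * z) := by group
    rw [h2, h1, ← mul_assoc, inv_mul_cancel, one_mul]
    exact hh

lemma map_conj_eq_of_mem_normalizer'' {G : Type*} [Group G] {H : Subgroup G} {x : G}
    (hx : x ∈ Subgroup.normalizer (H : Set G)) :
    Subgroup.map (MulAut.conj x).toMonoidHom H = H := by
  ext b
  simp only [Subgroup.mem_map, MulEquiv.coe_toMonoidHom, MulAut.conj_apply]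
  constructor
  · rintro ⟨a, ha, rfl⟩
    exact (Subgroup.mem_normalizer_iff.mp hx a).mp ha
  · intro hb
    refine ⟨x⁻¹ * b * x, ?_, by group⟩
    apply (Subgroup.mem_normalizer_iff.mp hx (x⁻¹ * b * x)).mpr
    have h2 : x * (x⁻¹ * b * x) * x⁻¹ = b := by group
    rwa [h2]

lemma mem_normalizer_sup'' {G : Type*} [Group G] {H K : Subgroup G} {x : G}
    (hH : x ∈ Subgroup.normalizer (H : Set G)) (hK : x ∈ Subgroup.normalizer (K : Set G)) : x ∈ Subgroup.normalizer ((H ⊔ K : Subgroup G) : Set G) := by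
  have hmap : Subgroup.map (MulAut.conj x).toMonoidHom (H ⊔ K) = H ⊔ K := by
    rw [Subgroup.map_sup, map_conj_eq_of_mem_normalizer'' hH,
      map_conj_eq_of_mem_normalizer'' hK]
  rw [Subgroup.mem_normalizer_iff]
  intro b
  constructor
  · intro hb
    have h1 : (MulAut.conj x).toMonoidHom b ∈ Subgroup.map (MulAut.conj x).toMonoidHom (H ⊔ K) :=
      Subgroup.mem_map_of_mem _ hb
    rw [hmap] at h1
    simpa using h1
  · intro hb
    rw [← hmap] at hb
    obtain ⟨a, ha, hab⟩ := hb
    simp only [MulEquiv.coe_toMonoidHom, MulAut.conj_apply] at hab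
    have : a = b := mul_left_cancel (mul_right_cancel hab)
    exact this ▸ ha

lemma norm_of_subgroupOf'' {G : Type*} [Group G] {P R : Subgroup G} (hRP : R ≤ P) {u : ↥P}
    (hu : u ∈ Subgroup.normalizer ((R.subgroupOf P : Subgroup ↥P) : Set ↥P)) : (u : G) ∈ Subgroup.normalizer (R : Set G) := by
  rw [Subgroup.mem_normalizer_iff] at hu ⊢
  intro b
  constructor
  · intro hb
    have h1 := (hu ⟨b, hRP hb⟩).mp (by simpa [Subgroup.mem_subgroupOf] using hb)
    simpa [Subgroup.mem_subgroupOf] using h1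
  · intro hb
    have hbP : b ∈ P := by
      have h2 : (u : G) * b * (u : G)⁻¹ ∈ P := hRP hb
      have h3 := mul_mem (mul_mem (inv_mem u.2) h2) u.2
      have h4 : (u : G)⁻¹ * ((u : G) * b * (u : G)⁻¹) * (u : G) = b := by group
      rwa [h4] at h3
    have h1 := (hu ⟨b, hbP⟩).mpr (by simpa [Subgroup.mem_subgroupOf] using hb)
    simpa [Subgroup.mem_subgroupOf] using h1

lemma key_modeq'' {p : ℕ} (hp : p.Prime) (n : ℕ) (hn : n ≠ 0) :
    (n / p ^ n.factorization p) *
      (((n / p ^ n.factorization p : ℕ) : ZMod (p ^ n.factorization p))⁻¹).val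
      ≡ 1 [MOD p ^ n.factorization p] := by
  set k := n.factorization p with hk
  set m := n / p ^ k with hm
  haveI : NeZero (p ^ k) := ⟨pow_ne_zero _ hp.pos.ne'⟩
  have hcop : Nat.Coprime m (p ^ k) :=
    Nat.Coprime.pow_right _ (Nat.coprime_ordCompl hp hn).symm
  have h1 : ((m * (((m : ZMod (p ^ k))⁻¹).val) : ℕ) : ZMod (p ^ k)) = ((1 : ℕ) : ZMod (p ^ k)) := by
    push_cast
    rw [ZMod.natCast_val, ZMod.cast_id]
    exact ZMod.coe_mul_inv_eq_one m hcop
  exact (ZMod.natCast_eq_natCast_iff _ _ _).mp h1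

lemma pPart_mul_eq'' {G : Type*} [Group G] [Finite G] {p : ℕ} (hp : p.Prime)
    {u c : G} (h : Commute u c) {α : ℕ} (hu : orderOf u = p ^ α)
    (hc : ¬ p ∣ orderOf c) : pPart p (u * c) = u := by
  have hcm : Nat.Coprime (orderOf u) (orderOf c) := by
    rw [hu]; exact Nat.Coprime.pow_left _ ((Nat.Prime.coprime_iff_not_dvd hp).mpr hc)
  have hn : orderOf (u * c) = p ^ α * orderOf c := by
    rw [h.orderOf_mul_eq_mul_orderOf_of_coprime hcm, hu]
  set m := orderOf c with hmdef
  have hm0 : m ≠ 0 := (orderOf_pos c).ne'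
  have hn0 : orderOf (u * c) ≠ 0 := (orderOf_pos _).ne'
  have hk : (orderOf (u * c)).factorization p = α := by
    rw [hn, Nat.factorization_mul (pow_ne_zero _ hp.pos.ne') hm0]
    simp [hp.factorization_pow, Nat.factorization_eq_zero_of_not_dvd hc]
  have hmod := key_modeq'' hp (orderOf (u * c)) hn0
  rw [hk] at hmod
  have hm : orderOf (u * c) / p ^ α = m := by
    rw [hn, Nat.mul_div_cancel_left _ (pow_pos hp.pos α)]
  rw [hm] at hmod
  unfold pPart
  rw [hk, hm, h.mul_pow]
  have hc1 : c ^ (m * ((m : ZMod (p ^ α))⁻¹).val) = 1 := by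
    rw [pow_mul, pow_orderOf_eq_one, one_pow]
  have hu1 : u ^ (m * ((m : ZMod (p ^ α))⁻¹).val) = u := by
    have h2 : u ^ (m * ((m : ZMod (p ^ α))⁻¹).val) = u ^ 1 := by
      rw [pow_eq_pow_iff_modEq, hu]
      exact hmod
    simpa using h2
  rw [hc1, hu1, mul_one]

lemma pPart_decomp'' {G : Type*} [Group G] [Finite G] {p : ℕ} (hp : p.Prime) (x : G) :
    ∃ (t : ℕ) (s : ℤ) (α : ℕ),
      pPart p x = x ^ t ∧ x = pPart p x * x ^ s ∧
      orderOf (pPart p x) = p ^ α ∧ ¬ p ∣ orderOf (x ^ s) := by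
  set n := orderOf x with hn
  have hn0 : n ≠ 0 := (orderOf_pos x).ne'
  set k := n.factorization p with hk
  set m := n / p ^ k with hm
  set a := ((m : ZMod (p ^ k))⁻¹).val with ha
  have hdef : pPart p x = x ^ (m * a) := rfl
  have hmod : m * a ≡ 1 [MOD p ^ k] := key_modeq'' hp n hn0
  have hdvd : (p ^ k : ℤ) ∣ (m * a : ℕ) - 1 := by
    have h1 := (Nat.modEq_iff_dvd).mp hmod
    -- h1 : (p^k : ℤ) ∣ 1 - (m*a)
    have h2 := dvd_neg.mpr h1
    simpa using h2
  have hnm : p ^ k * m = n := Nat.ordProj_mul_ordCompl_eq_self n p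
  -- order of the p-part
  have hppow : (x ^ (m * a)) ^ (p ^ k) = 1 := by
    rw [← pow_mul, mul_assoc, mul_comm a (p ^ k), ← mul_assoc, mul_comm m (p ^ k), hnm,
      pow_mul, pow_orderOf_eq_one, one_pow]
  obtain ⟨α, hαle, hα⟩ := (Nat.dvd_prime_pow hp).mp (orderOf_dvd_of_pow_eq_one hppow)
  -- the p'-part
  refine ⟨m * a, 1 - (m * a : ℤ), α, hdef, ?_, by rw [hdef, hα], ?_⟩
  · rw [hdef, ← zpow_natCast, ← zpow_add]
    norm_num
  · have he : (x ^ ((1 : ℤ) - (m * a : ℕ))) ^ m = 1 := by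
      rw [← zpow_natCast, ← zpow_mul]
      rw [← orderOf_dvd_iff_zpow_eq_one]
      have : ((1 : ℤ) - (m * a : ℕ)) * m = -(((m * a : ℕ) - 1) * m) := by ring
      rw [this, ← hn]
      refine dvd_neg.mpr ?_
      have : (n : ℤ) = (p ^ k : ℤ) * m := by exact_mod_cast hnm.symm
      rw [this]
      exact mul_dvd_mul hdvd dvd_rfl
    intro hpdvd
    have h3 : orderOf (x ^ ((1 : ℤ) - (m * a : ℕ))) ∣ m := orderOf_dvd_of_pow_eq_one he
    have h4 : p ∣ m := hpdvd.trans h3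
    exact Nat.Prime.not_dvd_one hp
      (Nat.Coprime.eq_one_of_dvd (Nat.coprime_ordCompl hp hn0) h4 ▸ dvd_rfl)

end Statement13Helpers

lemma lemA'' {p : ℕ} [Fact p.Prime] {G : Type*} [Group G] [Finite G]
    {F : Type*} [Field F]
    (φ : ∀ P : Subgroup G, ↥(Subgroup.normalizer (P : Set G)) →* Fˣ)
    (hker : ∀ (P : Subgroup G), IsPGroup p ↥P → ∀ (x : G) (hx : x ∈ P),
      φ P ⟨x, Subgroup.le_normalizer hx⟩ = 1)
    (hcoh : ∀ (P : Subgroup G), IsPGroup p ↥P → ∀ (x : G) (hx : x ∈ Subgroup.normalizer (P : Set G))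
      (hx' : x ∈ Subgroup.normalizer ((P ⊔ Subgroup.zpowers (pPart p x) : Subgroup G) : Set G)),
      φ P ⟨x, hx⟩ = φ (P ⊔ Subgroup.zpowers (pPart p x)) ⟨x, hx'⟩)
    (htriv : ∀ x : ↥(Subgroup.normalizer ((⊥ : Subgroup G) : Set G)), φ ⊥ x = 1) :
    ∀ (n : ℕ) (P : Subgroup G), Nat.card ↥P ≤ n → IsPGroup p ↥P →
      ∀ c : G, c ∈ Subgroup.centralizer (P : Set G) → ¬ p ∣ orderOf c →
      ∀ hc : c ∈ Subgroup.normalizer (P : Set G), φ P ⟨c, hc⟩ = 1 := by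
  have hp : p.Prime := Fact.out
  intro n
  induction n with
  | zero =>
    intro P hcard
    have := Nat.card_pos (α := ↥P)
    omega
  | succ n ih =>
    intro P hcard hP c hcC hc' hcN
    by_cases hPbot : P = ⊥
    · subst hPbot; exact htriv ⟨c, hcN⟩
    -- pick a maximal proper subgroup R of P
    obtain ⟨R, hRlt, hRmax⟩ : ∃ R : Subgroup G, R < P ∧
        ∀ R' : Subgroup G, R' < P → R ≤ R' → R = R' := by
      obtain ⟨R, hR, hmax⟩ := Set.Finite.exists_maximalFor id {R : Subgroup G | R < P}
        (Set.toFinite _) ⟨⊥, bot_lt_iff_ne_bot.mpr hPbot⟩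
      exact ⟨R, hR, fun R' h1 h2 => le_antisymm h2 (hmax h1 h2)⟩
    have hRle : R ≤ P := hRlt.le
    have hRp : IsPGroup p ↥R := hP.to_le hRle
    -- normalizer condition inside P gives u ∈ N_P(R) \ R
    haveI : Group.IsNilpotent ↥P := hP.isNilpotent
    have hNC := normalizerCondition_of_isNilpotent (G := ↥P)
    have hR'top : R.subgroupOf P < ⊤ := lt_top_iff_ne_top.mpr (by
      rw [Ne, Subgroup.subgroupOf_eq_top]
      exact fun h => hRlt.not_ge h)
    obtain ⟨u', hu'N, hu'R⟩ := SetLike.exists_of_lt (hNC (R.subgroupOf P) hR'top)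
    set u : G := (u' : G) with hudef
    have huP : u ∈ P := u'.2
    have huR : u ∉ R := fun h => hu'R (Subgroup.mem_subgroupOf.mpr h)
    have huN : u ∈ Subgroup.normalizer (R : Set G) := norm_of_subgroupOf'' hRle hu'N
    -- R ⊔ ⟨u⟩ = P
    have hsupP : R ⊔ Subgroup.zpowers u = P := by
      have hle : R ⊔ Subgroup.zpowers u ≤ P := sup_le hRle (Subgroup.zpowers_le.mpr huP)
      rcases lt_or_eq_of_le hle with hlt2 | heq
      · exfalso
        have := hRmax _ hlt2 le_sup_left
        exact huR (this ▸ (le_sup_right (a := R) (Subgroup.mem_zpowers u)))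
      · exact heq
    -- u has p-power order
    obtain ⟨β, hβ⟩ := hP u'
    have hupow : u ^ (p ^ β) = 1 := by
      have h0 : ((u' ^ (p ^ β) : ↥P) : G) = ((1 : ↥P) : G) := congrArg _ hβ
      simpa using h0
    obtain ⟨α, -, hα⟩ := (Nat.dvd_prime_pow hp).mp (orderOf_dvd_of_pow_eq_one hupow)
    -- u and c commute
    have hcomm : Commute u c := (Subgroup.mem_centralizer_iff.mp hcC u huP)
    -- p-part of u*c is u
    have hpy : pPart p (u * c) = u := pPart_mul_eq'' hp hcomm hα hc'
    have hpu : pPart p u = u := by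
      have h1 : ¬ p ∣ orderOf (1 : G) := by
        simpa using hp.one_lt.ne'
      have := pPart_mul_eq'' hp (Commute.one_right u) hα h1
      rwa [mul_one] at this
    -- memberships
    have hcCR : c ∈ Subgroup.centralizer (R : Set G) :=
      Subgroup.centralizer_le (SetLike.coe_subset_coe.mpr hRle) hcC
    have hcRn : c ∈ Subgroup.normalizer (R : Set G) := centralizer_le_normalizer'' R hcCR
    have hyRn : u * c ∈ Subgroup.normalizer (R : Set G) := mul_mem huN hcRn
    have huPn : u ∈ Subgroup.normalizer (P : Set G) := Subgroup.le_normalizer huP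
    have hyPn : u * c ∈ Subgroup.normalizer (P : Set G) := mul_mem huPn hcN
    -- coherence for y = u * c at R
    have hEQ : R ⊔ Subgroup.zpowers (pPart p (u * c)) = P := by rw [hpy, hsupP]
    have hy'N : u * c ∈ Subgroup.normalizer ((R ⊔ Subgroup.zpowers (pPart p (u * c)) : Subgroup G) : Set G) := by
      rw [hEQ]; exact hyPn
    have step1 := hcoh R hRp (u * c) hyRn hy'N
    have step2 : φ (R ⊔ Subgroup.zpowers (pPart p (u * c))) ⟨u * c, hy'N⟩
        = φ P ⟨u * c, hyPn⟩ := phi_congr'' φ hEQ _ _ _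
    -- coherence for u at R
    have hEQu : R ⊔ Subgroup.zpowers (pPart p u) = P := by rw [hpu, hsupP]
    have hu'N2 : u ∈ Subgroup.normalizer ((R ⊔ Subgroup.zpowers (pPart p u) : Subgroup G) : Set G) := by
      rw [hEQu]; exact huPn
    have stepu := hcoh R hRp u huN hu'N2
    have stepu2 : φ (R ⊔ Subgroup.zpowers (pPart p u)) ⟨u, hu'N2⟩ = φ P ⟨u, huPn⟩ :=
      phi_congr'' φ hEQu _ _ _
    have hφPu : φ P ⟨u, huPn⟩ = 1 := hker P hP u huP
    have hφRu : φ R ⟨u, huN⟩ = 1 := by rw [stepu, stepu2, hφPu]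
    -- induction for c at R
    have hcardR : Nat.card ↥R < Nat.card ↥P := by
      have hlt := Set.ncard_lt_ncard (SetLike.coe_ssubset_coe.mpr hRlt) (Set.toFinite _)
      have e1 : Nat.card ↥R = (R : Set G).ncard := Nat.card_coe_set_eq _
      have e2 : Nat.card ↥P = (P : Set G).ncard := Nat.card_coe_set_eq _
      omega
    have hφRc : φ R ⟨c, hcRn⟩ = 1 := ih R (by omega) hRp c hcCR hc' hcRn
    -- assemble
    have hmulR : (⟨u * c, hyRn⟩ : ↥(Subgroup.normalizer (R : Set G))) = ⟨u, huN⟩ * ⟨c, hcRn⟩ := rfl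
    have hmulP : (⟨u * c, hyPn⟩ : ↥(Subgroup.normalizer (P : Set G))) = ⟨u, huPn⟩ * ⟨c, hcN⟩ := rfl
    have : φ P ⟨u, huPn⟩ * φ P ⟨c, hcN⟩ = 1 := by
      rw [← map_mul, ← hmulP, ← step2, ← step1, hmulR, map_mul, hφRu, hφRc, one_mul]
    rwa [hφPu, one_mul] at this

theorem statement13 (p : ℕ) [Fact p.Prime]
    (G : Type w) [Group G] [Finite G]
    (F : Type v) [Field F] [CharP F p]
    (φ : ∀ P : Subgroup G, ↥(Subgroup.normalizer (P : Set G)) →* Fˣ)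
    (hker : ∀ (P : Subgroup G), IsPGroup p ↥P → ∀ (x : G) (hx : x ∈ P),
      φ P ⟨x, Subgroup.le_normalizer hx⟩ = 1)
    (hcoh : ∀ (P : Subgroup G), IsPGroup p ↥P → ∀ (x : G) (hx : x ∈ Subgroup.normalizer (P : Set G))
      (hx' : x ∈ Subgroup.normalizer ((P ⊔ Subgroup.zpowers (pPart p x) : Subgroup G) : Set G)),
      φ P ⟨x, hx⟩ = φ (P ⊔ Subgroup.zpowers (pPart p x)) ⟨x, hx'⟩)
    (htriv : ∀ x : ↥(Subgroup.normalizer ((⊥ : Subgroup G) : Set G)), φ ⊥ x = 1) :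
    ∀ (P : Subgroup G), IsPGroup p ↥P → ∀ (x : G),
      x ∈ P ⊔ Subgroup.centralizer (P : Set G) →
      ∀ hx : x ∈ Subgroup.normalizer (P : Set G), φ P ⟨x, hx⟩ = 1 := by
  have hp : p.Prime := Fact.out
  intro P hP x hx hxN
  -- decompose x = u * c with u ∈ P, c ∈ C_G(P)
  obtain ⟨u, huP, c, hcC, rfl⟩ :
      ∃ u ∈ P, ∃ c ∈ Subgroup.centralizer (P : Set G), u * c = x := by
    let K : Subgroup G :=
      { carrier := {y | ∃ u ∈ P, ∃ c ∈ Subgroup.centralizer (P : Set G), u * c = y}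
        one_mem' := ⟨1, one_mem _, 1, one_mem _, one_mul 1⟩
        mul_mem' := by
          rintro y z ⟨u1, hu1, c1, hc1, rfl⟩ ⟨u2, hu2, c2, hc2, rfl⟩
          refine ⟨u1 * u2, mul_mem hu1 hu2, c1 * c2, mul_mem hc1 hc2, ?_⟩
          have h12 : u2 * c1 = c1 * u2 := Subgroup.mem_centralizer_iff.mp hc1 u2 hu2
          calc u1 * u2 * (c1 * c2) = u1 * (u2 * c1) * c2 := by group
            _ = u1 * (c1 * u2) * c2 := by rw [h12]
            _ = u1 * c1 * (u2 * c2) := by group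
        inv_mem' := by
          rintro y ⟨u, hu, c, hc, rfl⟩
          refine ⟨u⁻¹, inv_mem hu, c⁻¹, inv_mem hc, ?_⟩
          have h1 : u * c = c * u := Subgroup.mem_centralizer_iff.mp hc u hu
          rw [← mul_inv_rev, ← h1] }
    have hle : P ⊔ Subgroup.centralizer (P : Set G) ≤ K :=
      sup_le (fun g hg => ⟨g, hg, 1, one_mem _, mul_one g⟩)
        (fun g hg => ⟨1, one_mem _, g, hg, one_mul g⟩)
    exact hle hx
  have hcPn : c ∈ Subgroup.normalizer (P : Set G) := centralizer_le_normalizer'' P hcC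
  have huPn : u ∈ Subgroup.normalizer (P : Set G) := Subgroup.le_normalizer huP
  -- decompose c into p-part and p'-part
  obtain ⟨t, s, α, hdt, hce, hdord, heord⟩ := pPart_decomp'' hp c
  set d := pPart p c with hd
  set e := c ^ s with he
  set Q := P ⊔ Subgroup.zpowers d with hQ
  have hdC : d ∈ Subgroup.centralizer (P : Set G) := by rw [hdt]; exact pow_mem hcC t
  have heC : e ∈ Subgroup.centralizer (P : Set G) := zpow_mem hcC s
  -- Q is a p-group
  have hzp : IsPGroup p ↥(Subgroup.zpowers d) := by
    intro g
    refine ⟨α, ?_⟩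
    obtain ⟨j, hj⟩ := Subgroup.mem_zpowers_iff.mp g.2
    have h1 : (g : G) ^ (p ^ α) = 1 := by
      rw [← hj, ← zpow_natCast, ← zpow_mul, mul_comm, zpow_mul, zpow_natCast,
        ← hdord, pow_orderOf_eq_one, one_zpow]
    exact Subtype.ext (by simpa using h1)
  have hQp : IsPGroup p ↥Q := by
    have h1 := IsPGroup.to_sup_of_normal_right' hzp hP
      (le_trans (Subgroup.zpowers_le.mpr hdC) (centralizer_le_normalizer'' P))
    rw [hQ, sup_comm]
    exact h1
  -- c normalizes Q
  have hcZd : c ∈ Subgroup.centralizer (Subgroup.zpowers d : Set G) := by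
    rw [Subgroup.mem_centralizer_iff]
    intro g hg
    obtain ⟨j, rfl⟩ := Subgroup.mem_zpowers_iff.mp hg
    have : Commute c (d ^ j) := by
      rw [hdt]; exact ((Commute.refl c).pow_right t).zpow_right j
    exact this.symm.eq
  have hcQn : c ∈ Subgroup.normalizer (Q : Set G) :=
    mem_normalizer_sup'' hcPn (centralizer_le_normalizer'' _ hcZd)
  -- memberships of d and e
  have hdQ : d ∈ Q := le_sup_right (α := Subgroup G) (Subgroup.mem_zpowers d)
  have hdQn : d ∈ Subgroup.normalizer (Q : Set G) := Subgroup.le_normalizer hdQ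
  have heCQ : e ∈ Subgroup.centralizer (Q : Set G) := by
    rw [Subgroup.mem_centralizer_iff]
    intro g hg
    have hle : Q ≤ Subgroup.centralizer {e} := by
      refine sup_le (fun g' hg' => ?_) (fun g' hg' => ?_)
      · rw [Subgroup.mem_centralizer_iff]
        rintro h (rfl : h = e)
        exact (Subgroup.mem_centralizer_iff.mp heC g' hg').symm
      · obtain ⟨j, rfl⟩ := Subgroup.mem_zpowers_iff.mp hg'
        rw [Subgroup.mem_centralizer_iff]
        rintro h (rfl : h = e)
        have : Commute (d ^ j) e := by
          rw [hdt, he]; exact (((Commute.refl c).zpow_right s).pow_left t).zpow_left j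
        exact this.symm.eq
    exact (Subgroup.mem_centralizer_iff.mp (hle hg) e rfl).symm
  have heQn : e ∈ Subgroup.normalizer (Q : Set G) := centralizer_le_normalizer'' _ heCQ
  -- put everything together
  have hstep : φ P ⟨c, hcPn⟩ = φ Q ⟨c, hcQn⟩ := by
    have := hcoh P hP c hcPn (by rw [← hQ] at *; exact hcQn)
    exact this
  have hmulQ : (⟨c, hcQn⟩ : ↥(Subgroup.normalizer (Q : Set G))) = ⟨d, hdQn⟩ * ⟨e, heQn⟩ := Subtype.ext hce
  have hφQd : φ Q ⟨d, hdQn⟩ = 1 := hker Q hQp d hdQ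
  have hφQe : φ Q ⟨e, heQn⟩ = 1 :=
    lemA'' φ hker hcoh htriv (Nat.card ↥Q) Q le_rfl hQp e heCQ heord heQn
  have hφPc : φ P ⟨c, hcPn⟩ = 1 := by
    rw [hstep, hmulQ, map_mul, hφQd, hφQe, one_mul]
  have hφPu : φ P ⟨u, huPn⟩ = 1 := hker P hP u huP
  have hmulP : (⟨u * c, hxN⟩ : ↥(Subgroup.normalizer (P : Set G))) = ⟨u, huPn⟩ * ⟨c, hcPn⟩ := rfl
  rw [hmulP, map_mul, hφPu, hφPc, one_mul]
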